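/- For any combinatory pre-model A and any n ∈ ℕ, the polynomial algebra A[x_1,...,x_n] is a retract of the polynomial algebra A[x] in one indeterminate. -/

import Mathlib

/-- A combinatory pre-model: an applicative structure with constants
`k`, `s`, `i`, `e` satisfying the usual equations. -/
structure CPM : Type 1 where
  carrier : Type
  app : carrier → carrier → carrier
  k : carrier
  s : carrier
  i : carrier
  e : carrier
  k_ax : ∀ a b, app (app k a) b = a
  s_ax : ∀ a b c, app (app (app s a) b) c = app (app a c) (app b c)
  i_ax : ∀ a, app i a = a
  e_ax : ∀ a b, app (app e a) b = app a b

/-- Homomorphisms of combinatory pre-models. -/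
structure CPMHom (A B : CPM) where
  toFun : A.carrier → B.carrier
  map_app : ∀ a b, toFun (A.app a b) = B.app (toFun a) (toFun b)
  map_k : toFun A.k = B.k
  map_s : toFun A.s = B.s
  map_i : toFun A.i = B.i
  map_e : toFun A.e = B.e

/-- Terms: the free applicative structure over a set `S`. -/
inductive Tm (S : Type) : Type
  | of : S → Tm S
  | app : Tm S → Tm S → Tm S

/-- The congruence generated by the combinator equations and the embedding
relation, defining the polynomial algebra over `A` in indeterminates `V`. -/
inductive PolyEq (A : CPM) (V : Type) : Tm (V ⊕ A.carrier) → Tm (V ⊕ A.carrier) → Prop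
  | kEq (t u) : PolyEq A V (.app (.app (.of (.inr A.k)) t) u) t
  | sEq (t u v) : PolyEq A V (.app (.app (.app (.of (.inr A.s)) t) u) v)
      (.app (.app t v) (.app u v))
  | iEq (t) : PolyEq A V (.app (.of (.inr A.i)) t) t
  | eEq (t u) : PolyEq A V (.app (.app (.of (.inr A.e)) t) u) (.app t u)
  | inj (a b : A.carrier) :
      PolyEq A V (.app (.of (.inr a)) (.of (.inr b))) (.of (.inr (A.app a b)))
  | refl (t) : PolyEq A V t t
  | symm {t u} : PolyEq A V t u → PolyEq A V u t
  | trans {t u v} : PolyEq A V t u → PolyEq A V u v → PolyEq A V t v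
  | congr {t t' u u'} : PolyEq A V t t' → PolyEq A V u u' →
      PolyEq A V (.app t u) (.app t' u')

/-- Application on the quotient. -/
def polyApp (A : CPM) (V : Type) :
    Quot (PolyEq A V) → Quot (PolyEq A V) → Quot (PolyEq A V) :=
  Quot.lift
    (fun t => Quot.lift (fun u => Quot.mk _ (Tm.app t u))
      (fun _ _ h => Quot.sound (PolyEq.congr (PolyEq.refl t) h)))
    (fun t t' h => by
      funext q
      induction q using Quot.ind with
      | _ u => exact Quot.sound (PolyEq.congr h (PolyEq.refl u)))

/-- The polynomial algebra `A[V]`. -/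
def polyAlg (A : CPM) (V : Type) : CPM where
  carrier := Quot (PolyEq A V)
  app := polyApp A V
  k := Quot.mk _ (.of (.inr A.k))
  s := Quot.mk _ (.of (.inr A.s))
  i := Quot.mk _ (.of (.inr A.i))
  e := Quot.mk _ (.of (.inr A.e))
  k_ax := by
    intro a b
    induction a using Quot.ind with | _ t =>
    induction b using Quot.ind with | _ u =>
    exact Quot.sound (PolyEq.kEq t u)
  s_ax := by
    intro a b c
    induction a using Quot.ind with | _ t =>
    induction b using Quot.ind with | _ u =>
    induction c using Quot.ind with | _ v =>
    exact Quot.sound (PolyEq.sEq t u v)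
  i_ax := by
    intro a
    induction a using Quot.ind with | _ t =>
    exact Quot.sound (PolyEq.iEq t)
  e_ax := by
    intro a b
    induction a using Quot.ind with | _ t =>
    induction b using Quot.ind with | _ u =>
    exact Quot.sound (PolyEq.eEq t u)

/-- The canonical embedding `η : A → A[V]`. -/
def eta (A : CPM) (V : Type) : CPMHom A (polyAlg A V) where
  toFun a := Quot.mk _ (.of (.inr a))
  map_app a b := (Quot.sound (PolyEq.inj a b)).symm
  map_k := rfl
  map_s := rfl
  map_i := rfl
  map_e := rfl

/-- The indeterminate `v` as an element of `A[V]`. -/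
def xvar (A : CPM) (V : Type) (v : V) : (polyAlg A V).carrier :=
  Quot.mk _ (.of (.inl v))

/-- Evaluate a term in a CPM `B` along a hom `φ : A → B` and an assignment `f`. -/
def evalTm {A : CPM} {V : Type} {B : CPM} (φ : CPMHom A B) (f : V → B.carrier) :
    Tm (V ⊕ A.carrier) → B.carrier
  | .of (.inl v) => f v
  | .of (.inr a) => φ.toFun a
  | .app t u => B.app (evalTm φ f t) (evalTm φ f u)

theorem evalTm_respects {A : CPM} {V : Type} {B : CPM} (φ : CPMHom A B)
    (f : V → B.carrier) {t u} (h : PolyEq A V t u) : evalTm φ f t = evalTm φ f u := by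
  induction h with
  | kEq t u => simp [evalTm, φ.map_k, B.k_ax]
  | sEq t u v => simp [evalTm, φ.map_s, B.s_ax]
  | iEq t => simp [evalTm, φ.map_i, B.i_ax]
  | eEq t u => simp [evalTm, φ.map_e, B.e_ax]
  | inj a b => simp [evalTm, φ.map_app]
  | refl t => rfl
  | symm _ ih => exact ih.symm
  | trans _ _ ih1 ih2 => exact ih1.trans ih2
  | congr _ _ ih1 ih2 => simp only [evalTm, ih1, ih2]

/-- The universal property of the polynomial algebra. -/
def extendHom {A : CPM} {V : Type} {B : CPM} (φ : CPMHom A B) (f : V → B.carrier) :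
    CPMHom (polyAlg A V) B where
  toFun := Quot.lift (evalTm φ f) (fun _ _ h => evalTm_respects φ f h)
  map_app a b := by
    induction a using Quot.ind with | _ t =>
    induction b using Quot.ind with | _ u =>
    rfl
  map_k := φ.map_k
  map_s := φ.map_s
  map_i := φ.map_i
  map_e := φ.map_e

/-- Pairing combinator `[a,b] = S (S I (K a)) (K b)`. -/
def cpmPair (B : CPM) (a b : B.carrier) : B.carrier :=
  B.app (B.app B.s (B.app (B.app B.s B.i) (B.app B.k a))) (B.app B.k b)

def cpmFst (B : CPM) (p : B.carrier) : B.carrier := B.app p B.k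

def cpmSnd (B : CPM) (p : B.carrier) : B.carrier := B.app p (B.app B.k B.i)

theorem cpmFst_pair (B : CPM) (a b : B.carrier) : cpmFst B (cpmPair B a b) = a := by
  simp [cpmFst, cpmPair, B.s_ax, B.i_ax, B.k_ax]

theorem cpmSnd_pair (B : CPM) (a b : B.carrier) : cpmSnd B (cpmPair B a b) = b := by
  simp [cpmSnd, cpmPair, B.s_ax, B.i_ax, B.k_ax]

theorem hom_pair {B C : CPM} (φ : CPMHom B C) (a b : B.carrier) :
    φ.toFun (cpmPair B a b) = cpmPair C (φ.toFun a) (φ.toFun b) := by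
  simp [cpmPair, φ.map_app, φ.map_s, φ.map_i, φ.map_k]

theorem hom_snd {B C : CPM} (φ : CPMHom B C) (p : B.carrier) :
    φ.toFun (cpmSnd B p) = cpmSnd C (φ.toFun p) := by
  simp [cpmSnd, φ.map_app, φ.map_k, φ.map_i]

/-- `n`-tuples via nested pairing. -/
def cpmTuple (B : CPM) : ∀ n, (Fin n → B.carrier) → B.carrier
  | 0, _ => B.i
  | n + 1, f => cpmPair B (f 0) (cpmTuple B n (fun i => f i.succ))

/-- Projections for `n`-tuples. -/
def cpmProj (B : CPM) : ∀ n, Fin n → B.carrier → B.carrier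
  | 0, i, _ => i.elim0
  | n + 1, i, p => Fin.cases (cpmFst B p) (fun j => cpmProj B n j (cpmSnd B p)) i

theorem cpmProj_tuple (B : CPM) : ∀ n (i : Fin n) (f : Fin n → B.carrier),
    cpmProj B n i (cpmTuple B n f) = f i := by
  intro n
  induction n with
  | zero => exact fun i _ => i.elim0
  | succ n ih =>
    intro i f
    induction i using Fin.cases with
    | zero => simpa [cpmProj, cpmTuple] using cpmFst_pair B _ _
    | succ j => simp [cpmProj, cpmTuple, cpmSnd_pair, ih]

theorem hom_proj {B C : CPM} (φ : CPMHom B C) :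
    ∀ n (i : Fin n) (p : B.carrier),
      φ.toFun (cpmProj B n i p) = cpmProj C n i (φ.toFun p) := by
  intro n
  induction n with
  | zero => exact fun i _ => i.elim0
  | succ n ih =>
    intro i p
    induction i using Fin.cases with
    | zero => simp [cpmProj, cpmFst, φ.map_app, φ.map_k]
    | succ j => simp [cpmProj, ih, hom_snd]

/-- `A[x₁,…,xₙ]` is a retract of `A[x]`. -/
theorem polyAlg_fin_retract_of_polyAlg_one (A : CPM) (n : ℕ) :
    ∃ (s : CPMHom (polyAlg A (Fin n)) (polyAlg A Unit))
      (r : CPMHom (polyAlg A Unit) (polyAlg A (Fin n))),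
      ∀ t, r.toFun (s.toFun t) = t := by
  refine ⟨extendHom (eta A Unit) (fun i => cpmProj (polyAlg A Unit) n i (xvar A Unit ())),
    extendHom (eta A (Fin n)) (fun _ => cpmTuple (polyAlg A (Fin n)) n (xvar A (Fin n))),
    ?_⟩
  intro t
  induction t using Quot.ind with | _ t =>
  induction t with
  | of v =>
    cases v with
    | inl i =>
      show (extendHom (eta A (Fin n)) _).toFun
          (cpmProj (polyAlg A Unit) n i (xvar A Unit ())) = _
      rw [hom_proj]
      show cpmProj (polyAlg A (Fin n)) n i
          (cpmTuple (polyAlg A (Fin n)) n (xvar A (Fin n))) = _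
      rw [cpmProj_tuple]
      rfl
    | inr a => simp [extendHom, evalTm, eta]; rfl
  | app t u iht ihu =>
    show (extendHom (eta A (Fin n)) _).toFun
        ((polyAlg A Unit).app
          ((extendHom (eta A Unit) _).toFun (Quot.mk _ t))
          ((extendHom (eta A Unit) _).toFun (Quot.mk _ u))) = _
    rw [(extendHom (eta A (Fin n)) _).map_app, iht, ihu]
    rfl
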